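/- If γ : [T₀,∞) → ℝⁿ is a C² curve satisfying ‖γ''(t)‖ = O(t^(-4/3)) as t → ∞ and ‖γ(t)‖ = O(t^(2/3)), then γ'(t) → 0 as t → ∞. -/

import Mathlib

open Filter

/-- If a C² curve `γ : [T₀,∞) → ℝⁿ` satisfies `‖γ''(t)‖ = O(t^(-4/3))` and
`‖γ(t)‖ = O(t^(2/3))` as `t → ∞`, then `γ'(t) → 0`. -/
theorem velocity_tendsto_zero
    (n : ℕ) (γ : ℝ → EuclideanSpace ℝ (Fin n)) (T₀ : ℝ) (hT₀ : 0 < T₀)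
    (hC2 : ContDiffOn ℝ 2 γ (Set.Ici T₀))
    (C : ℝ)
    (hacc : ∀ᶠ t in atTop, ‖deriv (deriv γ) t‖ ≤ C * t ^ (-(4 : ℝ) / 3))
    (hpos : ∀ᶠ t in atTop, ‖γ t‖ ≤ C * t ^ ((2 : ℝ) / 3)) :
    Tendsto (deriv γ) atTop (nhds 0) := by
  obtain ⟨T₁, hT₁⟩ := eventually_atTop.1 hacc
  obtain ⟨T₂, hT₂⟩ := eventually_atTop.1 hpos
  have hC0 : 0 ≤ C := by
    have hx : (0:ℝ) < max T₁ 1 := lt_of_lt_of_le one_pos (le_max_right _ _)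
    have h := hT₁ (max T₁ 1) (le_max_left _ _)
    have hp : (0:ℝ) < (max T₁ 1) ^ (-(4:ℝ)/3) := Real.rpow_pos_of_pos hx _
    nlinarith [norm_nonneg (deriv (deriv γ) (max T₁ 1))]
  have hO : IsOpen (Set.Ioi T₀) := isOpen_Ioi
  have hC2' : ContDiffOn ℝ 2 γ (Set.Ioi T₀) := hC2.mono Set.Ioi_subset_Ici_self
  have hd1 : ∀ s ∈ Set.Ioi T₀, HasDerivAt γ (deriv γ s) s := fun s hs =>
    ((hC2'.differentiableOn (by norm_num)).differentiableAt (hO.mem_nhds hs)).hasDerivAt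
  have hdd : ContDiffOn ℝ 1 (deriv γ) (Set.Ioi T₀) :=
    hC2'.deriv_of_isOpen hO (by norm_num)
  have hd2 : ∀ s ∈ Set.Ioi T₀, HasDerivAt (deriv γ) (deriv (deriv γ) s) s := fun s hs =>
    ((hdd.differentiableOn (by norm_num)).differentiableAt (hO.mem_nhds hs)).hasDerivAt
  set K : ℝ := C * 2 ^ ((2:ℝ)/3) + C + C with hK
  have key : ∀ t, max (max T₁ T₂) (T₀ + 1) ≤ t → ‖deriv γ t‖ ≤ K * t ^ (-(1:ℝ)/3) := by
    intro t ht
    have ht1 : T₁ ≤ t := le_trans (le_max_left _ _) (le_trans (le_max_left _ _) ht)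
    have ht2 : T₂ ≤ t := le_trans (le_max_right _ _) (le_trans (le_max_left _ _) ht)
    have ht0 : T₀ + 1 ≤ t := le_trans (le_max_right _ _) ht
    have htpos : 0 < t := by linarith
    have hsub : Set.Icc t (2*t) ⊆ Set.Ioi T₀ := fun s hs => by
      have := hs.1; simp only [Set.mem_Ioi]; linarith
    -- second derivative bound on [t, 2t]
    have hbdd2 : ∀ s ∈ Set.Icc t (2*t), ‖deriv (deriv γ) s‖ ≤ C * t ^ (-(4:ℝ)/3) := by
      intro s hs
      refine le_trans (hT₁ s (le_trans ht1 hs.1)) ?_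
      exact mul_le_mul_of_nonneg_left
        (Real.rpow_le_rpow_of_nonpos htpos hs.1 (by norm_num)) hC0
    -- first mean value: deriv γ varies slowly on [t, 2t]
    have hvar : ∀ s ∈ Set.Icc t (2*t),
        ‖deriv γ s - deriv γ t‖ ≤ (C * t ^ (-(4:ℝ)/3)) * t := by
      intro s hs
      have := (convex_Icc t (2*t)).norm_image_sub_le_of_norm_hasDerivWithin_le
        (f := deriv γ) (f' := deriv (deriv γ))
        (fun x hx => (hd2 x (hsub hx)).hasDerivWithinAt) hbdd2
        (Set.left_mem_Icc.2 (by linarith)) hs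
      refine le_trans this ?_
      have : ‖s - t‖ ≤ t := by
        rw [Real.norm_eq_abs, abs_of_nonneg (by linarith [hs.1])]
        linarith [hs.2]
      exact mul_le_mul_of_nonneg_left this
        (mul_nonneg hC0 (Real.rpow_pos_of_pos htpos _).le)
    -- second mean value on g s = γ s - s • deriv γ t
    set v := deriv γ t with hv
    have hg : ∀ s ∈ Set.Icc t (2*t),
        HasDerivWithinAt (fun s => γ s - s • v) (deriv γ s - v) (Set.Icc t (2*t)) s := by
      intro s hs
      have h1 : HasDerivAt (fun x : ℝ => x • v) ((1:ℝ) • v) s := (hasDerivAt_id s).smul_const v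
      rw [one_smul] at h1
      exact ((hd1 s (hsub hs)).sub h1).hasDerivWithinAt
    have hmv2 := (convex_Icc t (2*t)).norm_image_sub_le_of_norm_hasDerivWithin_le
      (f := fun s => γ s - s • v) (f' := fun s => deriv γ s - v)
      hg hvar (Set.left_mem_Icc.2 (by linarith)) (Set.right_mem_Icc.2 (by linarith))
    have hn2t : ‖(2*t) - t‖ = t := by
      rw [Real.norm_eq_abs, abs_of_nonneg (by linarith)]; ring
    rw [hn2t] at hmv2
    have heq : (γ (2*t) - (2*t) • v) - (γ t - t • v) = (γ (2*t) - γ t) - t • v := by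
      rw [two_mul]; module
    rw [heq] at hmv2
    -- conclude: t • v is small
    have hbig : ‖t • v‖ ≤ ‖γ (2*t)‖ + ‖γ t‖ + C * t ^ (-(4:ℝ)/3) * t * t := by
      have : ‖t • v‖ ≤ ‖γ (2*t) - γ t‖ + ‖(γ (2*t) - γ t) - t • v‖ := by
        have := norm_sub_le ((γ (2*t) - γ t)) ((γ (2*t) - γ t) - t • v)
        simpa using this
      calc ‖t • v‖ ≤ ‖γ (2*t) - γ t‖ + ‖(γ (2*t) - γ t) - t • v‖ := this
        _ ≤ (‖γ (2*t)‖ + ‖γ t‖) + C * t ^ (-(4:ℝ)/3) * t * t := by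
            refine add_le_add (norm_sub_le _ _) ?_
            calc ‖(γ (2*t) - γ t) - t • v‖ ≤ C * t ^ (-(4:ℝ)/3) * t * t := hmv2
              _ = C * t ^ (-(4:ℝ)/3) * t * t := rfl
        _ = ‖γ (2*t)‖ + ‖γ t‖ + C * t ^ (-(4:ℝ)/3) * t * t := by ring
    have hγ2t : ‖γ (2*t)‖ ≤ C * 2 ^ ((2:ℝ)/3) * t ^ ((2:ℝ)/3) := by
      refine le_trans (hT₂ (2*t) (by linarith)) ?_
      rw [Real.mul_rpow (by norm_num) htpos.le, mul_assoc]
    have hγt : ‖γ t‖ ≤ C * t ^ ((2:ℝ)/3) := hT₂ t ht2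
    have hpow : t ^ (-(4:ℝ)/3) * t * t = t ^ ((2:ℝ)/3) := by
      have h2 : t * t = t ^ (2:ℝ) := by
        rw [show ((2:ℝ)) = ((2:ℕ):ℝ) by norm_num, Real.rpow_natCast, sq]
      rw [mul_assoc, h2, ← Real.rpow_add htpos]
      norm_num
    have htv : ‖t • v‖ = t * ‖v‖ := by
      rw [norm_smul, Real.norm_eq_abs, abs_of_pos htpos]
    have hKt : t * ‖v‖ ≤ K * t ^ ((2:ℝ)/3) := by
      rw [← htv]
      calc ‖t • v‖ ≤ ‖γ (2*t)‖ + ‖γ t‖ + C * t ^ (-(4:ℝ)/3) * t * t := hbig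
        _ ≤ C * 2 ^ ((2:ℝ)/3) * t ^ ((2:ℝ)/3) + C * t ^ ((2:ℝ)/3)
            + C * t ^ ((2:ℝ)/3) := by
            refine add_le_add (add_le_add hγ2t hγt) ?_
            rw [mul_assoc, mul_assoc, ← mul_assoc (t ^ (-(4:ℝ)/3)), hpow]
        _ = K * t ^ ((2:ℝ)/3) := by ring
    have hfin : t ^ ((2:ℝ)/3) = t * t ^ (-(1:ℝ)/3) := by
      nth_rewrite 2 [← Real.rpow_one t]
      rw [← Real.rpow_add htpos]
      norm_num
    rw [hfin, ← mul_assoc, mul_comm K t, mul_assoc] at hKt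
    exact le_of_mul_le_mul_left hKt htpos
  refine squeeze_zero_norm' (eventually_atTop.2 ⟨max (max T₁ T₂) (T₀ + 1), key⟩) ?_
  have : Tendsto (fun t : ℝ => t ^ (-(1:ℝ)/3)) atTop (nhds 0) := by
    have := tendsto_rpow_neg_atTop (y := (1:ℝ)/3) (by norm_num)
    simpa [neg_div] using this
  simpa using this.const_mul K
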